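/- Let G be a finite simple graph and v ∈ ker(G). Then every vertex u adjacent to v satisfies |N(u) ∩ ker(G)| ≥ 2, i.e., u has at least two neighbors in ker(G). -/

import Mathlib

open Finset

namespace CritGraph

variable {V : Type*} [Fintype V] [DecidableEq V]

/-- The neighborhood of a set of vertices `X`:
all vertices having at least one neighbor in `X`. -/
def nbhd (G : SimpleGraph V) [DecidableRel G.Adj] (X : Finset V) : Finset V :=
  univ.filter fun v => ∃ x ∈ X, G.Adj v x

/-- The difference `d(X) = |X| - |N(X)|` of a set of vertices `X`. -/
def diff (G : SimpleGraph V) [DecidableRel G.Adj] (X : Finset V) : ℤ :=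
  (X.card : ℤ) - ((nbhd G X).card : ℤ)

/-- A set of vertices is independent if no two of its vertices are adjacent. -/
def IsIndep (G : SimpleGraph V) (S : Finset V) : Prop :=
  ∀ u ∈ S, ∀ v ∈ S, ¬ G.Adj u v

instance (G : SimpleGraph V) [DecidableRel G.Adj] : DecidablePred (IsIndep G) := fun S =>
  inferInstanceAs (Decidable (∀ u ∈ S, ∀ v ∈ S, ¬ G.Adj u v))

/-- The critical difference `d_c(G) = max {d(X) : X ⊆ V}`. -/
def dC (G : SimpleGraph V) [DecidableRel G.Adj] : ℤ :=
  (univ : Finset V).powerset.sup' (Finset.powerset_nonempty _) (diff G)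

/-- The critical independence difference `id_c(G) = max {d(I) : I independent}`. -/
def idC (G : SimpleGraph V) [DecidableRel G.Adj] : ℤ :=
  ((univ : Finset V).powerset.filter (IsIndep G)).sup'
    ⟨∅, by simp [IsIndep]⟩ (diff G)

/-- `A` is a critical independent set: `A` is independent and
`d(A) = max {d(I) : I independent}`. -/
def IsCritIndep (G : SimpleGraph V) [DecidableRel G.Adj] (A : Finset V) : Prop :=
  IsIndep G A ∧ ∀ I : Finset V, IsIndep G I → diff G I ≤ diff G A

instance (G : SimpleGraph V) [DecidableRel G.Adj] : DecidablePred (IsCritIndep G) := fun A =>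
  inferInstanceAs (Decidable (IsIndep G A ∧ ∀ I : Finset V, IsIndep G I → diff G I ≤ diff G A))

/-- `ker(G)`: the intersection of all critical independent sets of `G`. -/
def kerG (G : SimpleGraph V) [DecidableRel G.Adj] : Finset V :=
  univ.filter fun v => ∀ A : Finset V, IsCritIndep G A → v ∈ A

/-- `G - v`: the induced subgraph of `G` on `V \ {v}`. -/
def deleteVert (G : SimpleGraph V) (v : V) : SimpleGraph {u : V // u ≠ v} :=
  G.comap Subtype.val

instance (G : SimpleGraph V) (v : V) [DecidableRel G.Adj] :
    DecidableRel (deleteVert G v).Adj := fun a b =>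
  inferInstanceAs (Decidable (G.Adj a.val b.val))

/-- `S` is an inclusion-minimal independent set with positive difference. -/
def MinPosIndep (G : SimpleGraph V) [DecidableRel G.Adj] (S : Finset V) : Prop :=
  IsIndep G S ∧ 0 < diff G S ∧ ∀ S' ⊂ S, ¬ (IsIndep G S' ∧ 0 < diff G S')

/-- `S` is a maximum independent set. -/
def IsMaxIndep (G : SimpleGraph V) (S : Finset V) : Prop :=
  IsIndep G S ∧ ∀ I : Finset V, IsIndep G I → I.card ≤ S.card

instance (G : SimpleGraph V) [DecidableRel G.Adj] : DecidablePred (IsMaxIndep G) := fun S =>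
  inferInstanceAs (Decidable (IsIndep G S ∧ ∀ I : Finset V, IsIndep G I → I.card ≤ S.card))

/-- `core(G)`: the intersection of all maximum independent sets of `G`. -/
def coreG (G : SimpleGraph V) [DecidableRel G.Adj] : Finset V :=
  univ.filter fun v => ∀ A : Finset V, IsMaxIndep G A → v ∈ A


set_option linter.unusedSectionVars false

section Aux

variable (G : SimpleGraph V) [DecidableRel G.Adj]

lemma mem_nbhd {X : Finset V} {x : V} : x ∈ nbhd G X ↔ ∃ y ∈ X, G.Adj x y := by
  simp [nbhd]

lemma isIndep_subset {X Y : Finset V} (hY : IsIndep G Y) (h : X ⊆ Y) : IsIndep G X :=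
  fun a ha b hb => hY a (h ha) b (h hb)

lemma exists_critIndep : ∃ A, IsCritIndep G A := by
  obtain ⟨A, hA, hEq⟩ := Finset.exists_mem_eq_sup'
    (⟨∅, by simp [IsIndep]⟩ : ((univ : Finset V).powerset.filter (IsIndep G)).Nonempty) (diff G)
  refine ⟨A, (mem_filter.mp hA).2, fun I hI => ?_⟩
  rw [← hEq]
  exact Finset.le_sup' (diff G) (mem_filter.mpr ⟨mem_powerset.mpr (subset_univ I), hI⟩)

lemma key_indep {A B : Finset V} (hA : IsIndep G A) (hB : IsIndep G B) :
    IsIndep G ((A \ nbhd G B) ∪ (B \ nbhd G A)) := by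
  intro a ha b hb hab
  simp only [mem_union, mem_sdiff] at ha hb
  rcases ha with ⟨haA, haNB⟩ | ⟨haB, haNA⟩
  · rcases hb with ⟨hbA, _⟩ | ⟨hbB, _⟩
    · exact hA a haA b hbA hab
    · exact haNB ((mem_nbhd G).mpr ⟨b, hbB, hab⟩)
  · rcases hb with ⟨hbA, _⟩ | ⟨hbB, _⟩
    · exact haNA ((mem_nbhd G).mpr ⟨b, hbA, hab⟩)
    · exact hB a haB b hbB hab

lemma key_card {A B : Finset V} (hA : IsIndep G A) (hB : IsIndep G B) :
    diff G A + diff G B ≤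
      diff G ((A \ nbhd G B) ∪ (B \ nbhd G A)) + diff G (A ∩ B) := by
  set NA := nbhd G A with hNA
  set NB := nbhd G B with hNB
  set I := (A \ NB) ∪ (B \ NA) with hI
  have e2 : (A \ NB) ∩ (B \ NA) = A ∩ B := by
    ext x
    simp only [mem_inter, mem_sdiff]
    constructor
    · rintro ⟨⟨h1, _⟩, ⟨h2, _⟩⟩; exact ⟨h1, h2⟩
    · rintro ⟨h1, h2⟩
      refine ⟨⟨h1, fun hx => ?_⟩, ⟨h2, fun hx => ?_⟩⟩
      · obtain ⟨y, hy, hxy⟩ := (mem_nbhd G).mp hx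
        exact hB x h2 y hy hxy
      · obtain ⟨y, hy, hxy⟩ := (mem_nbhd G).mp hx
        exact hA x h1 y hy hxy
  have e1 : I.card + (A ∩ B).card = (A \ NB).card + (B \ NA).card := by
    rw [hI, ← e2]; exact card_union_add_card_inter _ _
  have e3 : (A ∩ NB).card + (A \ NB).card = A.card := card_inter_add_card_sdiff _ _
  have e4 : (B ∩ NA).card + (B \ NA).card = B.card := card_inter_add_card_sdiff _ _
  -- disjointness
  have d1 : Disjoint (nbhd G I) (A ∩ NB) := by
    rw [disjoint_left]
    intro x hx hx'
    obtain ⟨y, hy, hxy⟩ := (mem_nbhd G).mp hx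
    obtain ⟨hxA, _⟩ := mem_inter.mp hx'
    rcases mem_union.mp hy with hy' | hy'
    · exact hA x hxA y (mem_sdiff.mp hy').1 hxy
    · exact (mem_sdiff.mp hy').2 ((mem_nbhd G).mpr ⟨x, hxA, hxy.symm⟩)
  have d2 : Disjoint (nbhd G I) (B ∩ NA) := by
    rw [disjoint_left]
    intro x hx hx'
    obtain ⟨y, hy, hxy⟩ := (mem_nbhd G).mp hx
    obtain ⟨hxB, _⟩ := mem_inter.mp hx'
    rcases mem_union.mp hy with hy' | hy'
    · exact (mem_sdiff.mp hy').2 ((mem_nbhd G).mpr ⟨x, hxB, hxy.symm⟩)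
    · exact hB x hxB y (mem_sdiff.mp hy').1 hxy
  have d3 : Disjoint (A ∩ NB) (B ∩ NA) := by
    rw [disjoint_left]
    intro x hx hx'
    obtain ⟨hxA, hxNB⟩ := mem_inter.mp hx
    obtain ⟨hxB, _⟩ := mem_inter.mp hx'
    obtain ⟨y, hy, hxy⟩ := (mem_nbhd G).mp hxNB
    exact hB x hxB y hy hxy
  have sub1 : nbhd G I ∪ (A ∩ NB) ∪ (B ∩ NA) ⊆ NA ∪ NB := by
    intro x hx
    rcases mem_union.mp hx with hx | hx
    · rcases mem_union.mp hx with hx | hx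
      · obtain ⟨y, hy, hxy⟩ := (mem_nbhd G).mp hx
        rcases mem_union.mp hy with hy' | hy'
        · exact mem_union_left _ ((mem_nbhd G).mpr ⟨y, (mem_sdiff.mp hy').1, hxy⟩)
        · exact mem_union_right _ ((mem_nbhd G).mpr ⟨y, (mem_sdiff.mp hy').1, hxy⟩)
      · exact mem_union_right _ (mem_inter.mp hx).2
    · exact mem_union_left _ (mem_inter.mp hx).2
  have e6 : (nbhd G I ∪ (A ∩ NB) ∪ (B ∩ NA)).card
      = (nbhd G I).card + (A ∩ NB).card + (B ∩ NA).card := by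
    rw [card_union_of_disjoint, card_union_of_disjoint d1]
    rw [disjoint_union_left]
    exact ⟨d2, d3⟩
  have e5 : (nbhd G I).card + (A ∩ NB).card + (B ∩ NA).card ≤ (NA ∪ NB).card := by
    rw [← e6]; exact card_le_card sub1
  have e7 : (nbhd G (A ∩ B)).card ≤ (NA ∩ NB).card := by
    apply card_le_card
    intro x hx
    obtain ⟨y, hy, hxy⟩ := (mem_nbhd G).mp hx
    obtain ⟨hyA, hyB⟩ := mem_inter.mp hy
    exact mem_inter.mpr ⟨(mem_nbhd G).mpr ⟨y, hyA, hxy⟩, (mem_nbhd G).mpr ⟨y, hyB, hxy⟩⟩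
  have e8 : (NA ∪ NB).card + (NA ∩ NB).card = NA.card + NB.card :=
    card_union_add_card_inter _ _
  simp only [diff]
  have c1 := e1; have c3 := e3; have c4 := e4
  zify at c1 c3 c4 e5 e7 e8
  linarith

lemma critIndep_inter {A B : Finset V} (hA : IsCritIndep G A) (hB : IsCritIndep G B) :
    IsCritIndep G (A ∩ B) := by
  have hIindep := key_indep G hA.1 hB.1
  have hcard := key_card G hA.1 hB.1
  have h1 := hA.2 _ hIindep
  have hABindep : IsIndep G (A ∩ B) := isIndep_subset G hA.1 (inter_subset_left)
  have h2 : diff G B ≤ diff G (A ∩ B) := by linarith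
  exact ⟨hABindep, fun I hI => le_trans (hB.2 I hI) h2⟩

lemma kerG_critIndep : IsCritIndep G (kerG G) := by
  set s := (univ : Finset V).powerset.filter (IsCritIndep G) with hs_def
  have hs : s.Nonempty := by
    obtain ⟨A, hA⟩ := exists_critIndep G
    exact ⟨A, mem_filter.mpr ⟨mem_powerset.mpr (subset_univ A), hA⟩⟩
  have hinf : ∀ (t : Finset (Finset V)) (ht : t.Nonempty),
      (∀ A ∈ t, IsCritIndep G A) → IsCritIndep G (t.inf' ht id) := by
    intro t ht
    induction ht using Finset.Nonempty.cons_induction with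
    | singleton a => intro h; simpa using h a (mem_singleton_self a)
    | cons a t h ht ih =>
        intro hall
        rw [Finset.inf'_cons ht]
        exact critIndep_inter G (hall a (mem_cons_self a t))
          (ih (fun A hA => hall A (mem_cons.mpr (Or.inr hA))))
  have heq : kerG G = s.inf' hs id := by
    refine le_antisymm (Finset.le_inf' hs id fun A hAs => ?_) ?_
    · intro x hx
      exact (mem_filter.mp hx).2 A (mem_filter.mp hAs).2
    · intro x hx
      refine mem_filter.mpr ⟨mem_univ x, fun A hA => ?_⟩
      exact Finset.inf'_le id (mem_filter.mpr ⟨mem_powerset.mpr (subset_univ A), hA⟩) hx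
  rw [heq]
  exact hinf s hs (fun A hA => (mem_filter.mp hA).2)

end Aux

/-- If `v ∈ ker(G)`, then every neighbor `u` of `v` has at least two
neighbors in `ker(G)`. -/
theorem two_le_card_neighbors_in_kerG (G : SimpleGraph V) [DecidableRel G.Adj]
    (v : V) (hv : v ∈ kerG G) (u : V) (hu : G.Adj u v) :
    2 ≤ (G.neighborFinset u ∩ kerG G).card := by
  by_contra h
  push_neg at h
  have hvmem : v ∈ G.neighborFinset u ∩ kerG G :=
    mem_inter.mpr ⟨(SimpleGraph.mem_neighborFinset G u v).mpr hu, hv⟩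
  have honly : ∀ w ∈ G.neighborFinset u ∩ kerG G, w = v := by
    intro w hw
    exact Finset.card_le_one.mp (Nat.lt_succ_iff.mp h) w hw v hvmem
  have hK := kerG_critIndep G
  set K := kerG G with hKdef
  set A' := K.erase v with hA'def
  have hvK : v ∈ K := hv
  have hA'indep : IsIndep G A' := isIndep_subset G hK.1 (erase_subset _ _)
  have huNK : u ∈ nbhd G K := (mem_nbhd G).mpr ⟨v, hvK, hu⟩
  have huNA' : u ∉ nbhd G A' := by
    intro hmem
    obtain ⟨w, hw, huw⟩ := (mem_nbhd G).mp hmem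
    have : w = v := honly w (mem_inter.mpr
      ⟨(SimpleGraph.mem_neighborFinset G u w).mpr huw, (Finset.erase_subset v K) hw⟩)
    rw [this] at hw; exact (notMem_erase v K) hw
  have hsub : nbhd G A' ⊆ (nbhd G K).erase u := by
    intro x hx
    refine mem_erase.mpr ⟨fun hxu => huNA' (hxu ▸ hx), ?_⟩
    obtain ⟨y, hy, hxy⟩ := (mem_nbhd G).mp hx
    exact (mem_nbhd G).mpr ⟨y, (erase_subset _ _) hy, hxy⟩
  have hcard1 : (nbhd G A').card ≤ (nbhd G K).card - 1 := by
    calc (nbhd G A').card ≤ ((nbhd G K).erase u).card := card_le_card hsub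
    _ = (nbhd G K).card - 1 := card_erase_of_mem huNK
  have hcard2 : A'.card = K.card - 1 := card_erase_of_mem hvK
  have hNKpos : 1 ≤ (nbhd G K).card := card_pos.mpr ⟨u, huNK⟩
  have hKpos : 1 ≤ K.card := card_pos.mpr ⟨v, hvK⟩
  have hdiff : diff G K ≤ diff G A' := by
    simp only [diff]
    zify at hcard1 hcard2 hNKpos hKpos
    omega
  have hA'crit : IsCritIndep G A' := ⟨hA'indep, fun I hI => le_trans (hK.2 I hI) hdiff⟩
  have : v ∈ A' := (mem_filter.mp hv).2 A' hA'crit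
  exact (notMem_erase v K) this



end CritGraph
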